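/- The set of invertible bounded linear operators on a Hilbert space H is a closed subset of the set of surjective bounded linear operators on H (in the operator-norm topology of B(H)). -/

import Mathlib

open Function ContinuousLinearMap

lemma stmt7_aux {H : Type*} [NormedAddCommGroup H] [InnerProductSpace ℂ H] [CompleteSpace H]
    (T : H →L[ℂ] H) (hT : Function.Surjective T)
    (h : ∀ ε > 0, ∃ S : H →L[ℂ] H, IsUnit S ∧ ‖S - T‖ < ε) : IsUnit T := by
  obtain ⟨C, hC, hpre⟩ := ContinuousLinearMap.exists_preimage_norm_le T hT
  obtain ⟨S, ⟨u, rfl⟩, hclose⟩ := h (1 / (4 * C)) (by positivity)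
  set S : H →L[ℂ] H := (u : H →L[ℂ] H)
  set V : H →L[ℂ] H := ((u⁻¹ : (H →L[ℂ] H)ˣ) : H →L[ℂ] H)
  have hVS : ∀ x, V (S x) = x := by
    intro x
    have hmul : V * S = 1 := u.inv_mul
    have := DFunLike.congr_fun hmul x
    simpa [ContinuousLinearMap.mul_apply] using this
  -- bound on ‖V‖
  have hVbound : ‖V‖ ≤ C + ‖V‖ / 4 := by
    apply ContinuousLinearMap.opNorm_le_bound _ (by positivity)
    intro y
    obtain ⟨x, hx, hxle⟩ := hpre y
    have hxeq : V y = x - V ((S - T) x) := by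
      have hy : y = S x - (S - T) x := by rw [← hx]; simp
      rw [hy, map_sub, hVS]
    rw [hxeq]
    calc ‖x - V ((S - T) x)‖ ≤ ‖x‖ + ‖V ((S - T) x)‖ := norm_sub_le _ _
      _ ≤ ‖x‖ + ‖V‖ * (‖S - T‖ * ‖x‖) := by
          gcongr
          calc ‖V ((S - T) x)‖ ≤ ‖V‖ * ‖(S - T) x‖ := V.le_opNorm _
            _ ≤ ‖V‖ * (‖S - T‖ * ‖x‖) := by
                gcongr <;> first | exact norm_nonneg _ | exact (S - T).le_opNorm x
      _ ≤ C * ‖y‖ + ‖V‖ * (1 / (4 * C) * (C * ‖y‖)) := by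
          gcongr <;> first | exact norm_nonneg _ | exact hxle | exact hclose.le
      _ = (C + ‖V‖ / 4) * ‖y‖ := by field_simp
  have hV2C : ‖V‖ ≤ 2 * C := by nlinarith [norm_nonneg V]
  -- T is bounded below
  have hbelow : ∀ x : H, ‖x‖ ≤ 4 * C * ‖T x‖ := by
    intro x
    have h1 : ‖x‖ ≤ 2 * C * ‖S x‖ := by
      calc ‖x‖ = ‖V (S x)‖ := by rw [hVS]
        _ ≤ ‖V‖ * ‖S x‖ := V.le_opNorm _
        _ ≤ 2 * C * ‖S x‖ := by gcongr <;> first | exact norm_nonneg _ | exact hV2C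
    have h2 : ‖S x‖ ≤ ‖T x‖ + 1 / (4 * C) * ‖x‖ := by
      calc ‖S x‖ = ‖T x + (S - T) x‖ := by congr 1; simp
        _ ≤ ‖T x‖ + ‖(S - T) x‖ := norm_add_le _ _
        _ ≤ ‖T x‖ + 1 / (4 * C) * ‖x‖ := by
            have h3 : ‖(S - T) x‖ ≤ 1 / (4 * C) * ‖x‖ := by
              calc ‖(S - T) x‖ ≤ ‖S - T‖ * ‖x‖ := (S - T).le_opNorm x
                _ ≤ 1 / (4 * C) * ‖x‖ := by
                    gcongr <;> first | exact norm_nonneg _ | exact hclose.le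
            linarith
    have h2' : 2 * C * ‖S x‖ ≤ 2 * C * ‖T x‖ + (1 / 2) * ‖x‖ := by
      have he : 2 * C * (‖T x‖ + 1 / (4 * C) * ‖x‖) = 2 * C * ‖T x‖ + (1 / 2) * ‖x‖ := by
        field_simp; ring
      have := mul_le_mul_of_nonneg_left h2 (by positivity : (0:ℝ) ≤ 2 * C)
      linarith
    linarith
  have hinj : Function.Injective T := by
    intro a b hab
    have h4 : ‖a - b‖ ≤ 4 * C * ‖T (a - b)‖ := hbelow _
    rw [map_sub, hab, sub_self, norm_zero, mul_zero] at h4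
    have := le_antisymm h4 (norm_nonneg _)
    exact sub_eq_zero.mp (norm_eq_zero.mp this)
  exact ContinuousLinearMap.isUnit_iff_bijective.mpr ⟨hinj, hT⟩

/-- The invertible bounded operators on a complex Hilbert space form a closed subset of the
set of surjective bounded operators (with its operator-norm subspace topology). -/
theorem stmt7 {H : Type*} [NormedAddCommGroup H] [InnerProductSpace ℂ H] [CompleteSpace H] :
    IsClosed {T : {S : H →L[ℂ] H // Function.Surjective S} | IsUnit T.1} := by
  apply IsSeqClosed.isClosed
  intro f T hf htends
  apply stmt7_aux T.1 T.2
  intro ε hε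
  have htends' : Filter.Tendsto (fun n => (f n).1) Filter.atTop (nhds T.1) :=
    (continuous_subtype_val.tendsto _).comp htends
  obtain ⟨N, hN⟩ := Metric.tendsto_atTop.mp htends' ε hε
  refine ⟨(f N).1, hf N, ?_⟩
  have := hN N le_rfl
  rwa [dist_eq_norm] at this
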